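/- Under the assumptions: F is differentiable, L-smooth and μ-strongly convex; each G_j is convex and c-Lipschitz; H = F + G has the unique minimizer x*; and the stepsize is constant, α^{(k)} ≡ α with 0 < α < 2μ/(3L²), β^{(k)} = mα. Set Γ = 2αμ − 3α²L² and δ = 7m²c²α². Then Γ ∈ (0,1) and the BlockProx iterates satisfy, for every k ≥ 0: E‖x^{(k)} − x*‖² ≤ (1 − Γ)^k·‖x^{(0)} − x*‖² + δ/Γ. -/

import Mathlib

open scoped RealInnerProductSpace
open Finset Filter


section Aux

variable {E : Type*} [NormedAddCommGroup E] [InnerProductSpace ℝ E]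

private lemma bp_aux_limit {a b C : ℝ} (hC : 0 ≤ C)
    (h : ∀ t : ℝ, 0 < t → t < 1 → a ≤ b + t * C) : a ≤ b := by
  by_contra hab
  push_neg at hab
  set t : ℝ := min (1/2) ((a - b) / (2 * (C + 1))) with ht_def
  have ht0 : 0 < t := lt_min (by norm_num) (div_pos (by linarith) (by linarith))
  have ht1 : t < 1 := lt_of_le_of_lt (min_le_left _ _) (by norm_num)
  have hkey := h t ht0 ht1
  have htle : t ≤ (a - b) / (2 * (C + 1)) := min_le_right _ _
  have h2 : t * (2 * (C + 1)) ≤ a - b := by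
    rw [← le_div_iff₀ (by linarith)]
    exact htle
  nlinarith

private lemma bp_prox_subgrad {G : E → ℝ} (hconv : ConvexOn ℝ Set.univ G) {β : ℝ} (hβ : 0 < β)
    {z p : E} (hmin : IsMinOn (fun u => G u + (1 / (2 * β)) * ‖z - u‖ ^ 2) Set.univ p)
    (y : E) : ⟪z - p, y - p⟫ ≤ β * (G y - G p) := by
  have key : ∀ t : ℝ, 0 < t → t < 1 →
      ⟪z - p, y - p⟫ ≤ β * (G y - G p) + t * (‖y - p‖ ^ 2 / 2) := by
    intro t ht0 ht1
    have hcomb : p + t • (y - p) = (1 - t) • p + t • y := by module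
    have hGc : G (p + t • (y - p)) ≤ (1 - t) * G p + t * G y := by
      rw [hcomb]
      exact hconv.2 (Set.mem_univ p) (Set.mem_univ y) (by linarith) (le_of_lt ht0) (by ring)
    have hmin' := hmin (Set.mem_univ (p + t • (y - p)))
    simp only [Set.mem_setOf_eq] at hmin'
    have hns : ‖z - (p + t • (y - p))‖ ^ 2
        = ‖z - p‖ ^ 2 - 2 * (t * ⟪z - p, y - p⟫) + t ^ 2 * ‖y - p‖ ^ 2 := by
      have h1 : z - (p + t • (y - p)) = (z - p) - t • (y - p) := by abel
      rw [h1, norm_sub_sq_real, real_inner_smul_right, norm_smul]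
      simp only [Real.norm_eq_abs, mul_pow, sq_abs]
    have hβ' : (0:ℝ) < 2 * β := by linarith
    have hmin'' : G p + (1 / (2 * β)) * ‖z - p‖ ^ 2
        ≤ (1 - t) * G p + t * G y + (1 / (2 * β)) * ‖z - (p + t • (y - p))‖ ^ 2 := by
      calc G p + (1 / (2 * β)) * ‖z - p‖ ^ 2
          ≤ G (p + t • (y - p)) + (1 / (2 * β)) * ‖z - (p + t • (y - p))‖ ^ 2 := hmin'
        _ ≤ (1 - t) * G p + t * G y + (1 / (2 * β)) * ‖z - (p + t • (y - p))‖ ^ 2 := by linarith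
    rw [hns] at hmin''
    have hexp : (1 / (2 * β)) * (‖z - p‖ ^ 2 - 2 * (t * ⟪z - p, y - p⟫) + t ^ 2 * ‖y - p‖ ^ 2)
        = (1 / (2 * β)) * ‖z - p‖ ^ 2 - t / β * ⟪z - p, y - p⟫
          + t ^ 2 / (2 * β) * ‖y - p‖ ^ 2 := by
      field_simp
    rw [hexp] at hmin''
    -- now : t/β * ⟪z-p,y-p⟫ ≤ t * (G y - G p) + t^2/(2β) * ‖y-p‖^2
    have h3 : t / β * ⟪z - p, y - p⟫ ≤ t * (G y - G p) + t ^ 2 / (2 * β) * ‖y - p‖ ^ 2 := by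
      linarith
    -- multiply by β/t
    have h4 : ⟪z - p, y - p⟫ ≤ β * (G y - G p) + t * β / (2 * β) * ‖y - p‖ ^ 2 := by
      have := mul_le_mul_of_nonneg_left h3 (le_of_lt (div_pos hβ ht0))
      calc ⟪z - p, y - p⟫ = (β / t) * (t / β * ⟪z - p, y - p⟫) := by
            field_simp
        _ ≤ (β / t) * (t * (G y - G p) + t ^ 2 / (2 * β) * ‖y - p‖ ^ 2) := this
        _ = β * (G y - G p) + t * β / (2 * β) * ‖y - p‖ ^ 2 := by
            field_simp
    have h5 : t * β / (2 * β) * ‖y - p‖ ^ 2 = t * (‖y - p‖ ^ 2 / 2) := by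
      field_simp
    linarith [h4, h5.le]
  exact bp_aux_limit (by positivity) key

end Aux

section Core
variable {E : Type*} [NormedAddCommGroup E] [InnerProductSpace ℝ E]

private lemma bp_prox_dist {G : E → ℝ} (hconv : ConvexOn ℝ Set.univ G)
    {c : ℝ} (hc : 0 ≤ c) (hlip : LipschitzWith c.toNNReal G)
    {β : ℝ} (hβ : 0 < β) {z p : E}
    (hmin : IsMinOn (fun u => G u + (1 / (2 * β)) * ‖z - u‖ ^ 2) Set.univ p) :
    ‖z - p‖ ≤ β * c := by
  have h1 := bp_prox_subgrad hconv hβ hmin z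
  have h2 : G z - G p ≤ c * ‖z - p‖ := by
    have := hlip.dist_le_mul z p
    rw [Real.coe_toNNReal c hc] at this
    calc G z - G p ≤ |G z - G p| := le_abs_self _
      _ = dist (G z) (G p) := (Real.dist_eq _ _).symm
      _ ≤ c * dist z p := this
      _ = c * ‖z - p‖ := by rw [dist_eq_norm]
  have h3 : ‖z - p‖ ^ 2 ≤ β * c * ‖z - p‖ := by
    have : ⟪z - p, z - p⟫ = ‖z - p‖ ^ 2 := real_inner_self_eq_norm_sq _
    nlinarith [h1, h2]
  rcases eq_or_lt_of_le (norm_nonneg (z - p)) with h | h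
  · rw [← h]; positivity
  · nlinarith

set_option maxHeartbeats 1000000 in
private lemma bp_one_step {m : ℕ} (hm : 0 < m) {c L μ α : ℝ} (hc : 0 ≤ c) (hL : 0 < L)
    (hμ : 0 < μ) (hα : 0 < α)
    (Gj : Fin m → E → ℝ) (hGconv : ∀ j, ConvexOn ℝ Set.univ (Gj j))
    (hGlip : ∀ j, LipschitzWith c.toNNReal (Gj j))
    (gradF : E → E) (x xstar : E)
    (hmono : μ * ‖x - xstar‖ ^ 2 ≤ ⟪gradF x - gradF xstar, x - xstar⟫)
    (hlipx : ‖gradF x - gradF xstar‖ ≤ L * ‖x - xstar‖)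
    (hGstar : (∑ j, Gj j xstar) - (∑ j, Gj j (x - α • gradF x))
      ≤ ⟪gradF xstar, (x - α • gradF x) - xstar⟫)
    (p : Fin m → E)
    (hp : ∀ j, IsMinOn
      (fun u => Gj j u + (1 / (2 * ((m : ℝ) * α))) * ‖(x - α • gradF x) - u‖ ^ 2) Set.univ (p j)) :
    ∑ j, ‖p j - xstar‖ ^ 2
      ≤ (m : ℝ) * ((1 - (2 * α * μ - 3 * α ^ 2 * L ^ 2)) * ‖x - xstar‖ ^ 2
          + 7 * (m : ℝ) ^ 2 * c ^ 2 * α ^ 2) := by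
  set β : ℝ := (m : ℝ) * α with hβdef
  have hβ : 0 < β := by rw [hβdef]; positivity
  set z : E := x - α • gradF x with hzdef
  clear_value β z
  -- per-j facts
  have hsub : ∀ j, ⟪z - p j, xstar - p j⟫ ≤ β * (Gj j xstar - Gj j (p j)) :=
    fun j => bp_prox_subgrad (hGconv j) hβ (hp j) xstar
  have hdist : ∀ j, ‖z - p j‖ ≤ β * c := fun j => bp_prox_dist (hGconv j) hc (hGlip j) hβ (hp j)
  have hlipG : ∀ j, Gj j z - Gj j (p j) ≤ c * ‖z - p j‖ := by
    intro j
    have := (hGlip j).dist_le_mul z (p j)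
    rw [Real.coe_toNNReal c hc] at this
    calc Gj j z - Gj j (p j) ≤ |Gj j z - Gj j (p j)| := le_abs_self _
      _ = dist (Gj j z) (Gj j (p j)) := (Real.dist_eq _ _).symm
      _ ≤ c * dist z (p j) := this
      _ = c * ‖z - p j‖ := by rw [dist_eq_norm]
  -- per-j norm bound
  have hkey : ∀ j, ‖p j - xstar‖ ^ 2
      ≤ ‖z - xstar‖ ^ 2 + 2 * β * (Gj j xstar - Gj j z) + 3 * β ^ 2 * c ^ 2 := by
    intro j
    have hdec : p j - xstar = (z - xstar) + (p j - z) := by abel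
    have hexp : ‖p j - xstar‖ ^ 2
        = ‖z - xstar‖ ^ 2 + 2 * ⟪z - xstar, p j - z⟫ + ‖p j - z‖ ^ 2 := by
      rw [hdec, norm_add_sq_real]
    have hsplit : ⟪z - xstar, p j - z⟫ = ⟪z - p j, xstar - p j⟫ - ‖p j - z‖ ^ 2 := by
      have e1 : z - xstar = (z - p j) + (p j - xstar) := by abel
      have e2 : p j - z = -(z - p j) := by abel
      rw [e1, e2, inner_add_left, inner_neg_right, inner_neg_right]
      have e3 : ⟪p j - xstar, z - p j⟫ = ⟪z - p j, p j - xstar⟫ := real_inner_comm _ _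
      have e4 : ⟪z - p j, z - p j⟫ = ‖z - p j‖ ^ 2 := real_inner_self_eq_norm_sq _
      have e5 : ‖p j - z‖ = ‖z - p j‖ := norm_sub_rev _ _
      have e6 : ⟪z - p j, xstar - p j⟫ = -⟪z - p j, p j - xstar⟫ := by
        rw [show xstar - p j = -(p j - xstar) by abel, inner_neg_right]
      rw [e3, e4, norm_neg]
      linarith [e6]
    have hGj : Gj j xstar - Gj j (p j)
        ≤ (Gj j xstar - Gj j z) + c * (β * c) := by
      have := hlipG j
      have h2 : c * ‖z - p j‖ ≤ c * (β * c) := mul_le_mul_of_nonneg_left (hdist j) hc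
      linarith
    have hnz : ‖p j - z‖ ^ 2 ≤ β ^ 2 * c ^ 2 := by
      rw [show ‖p j - z‖ = ‖z - p j‖ from norm_sub_rev _ _]
      nlinarith [hdist j, norm_nonneg (z - p j)]
    have hGj' : 2 * β * (Gj j xstar - Gj j (p j))
        ≤ 2 * β * ((Gj j xstar - Gj j z) + c * (β * c)) :=
      mul_le_mul_of_nonneg_left hGj (by positivity)
    have hd2 : (0:ℝ) ≤ ‖p j - z‖ ^ 2 := sq_nonneg _
    nlinarith [hsub j, hexp, hsplit, hGj', hnz, hd2]
  -- sum over j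
  have hsum : ∑ j, ‖p j - xstar‖ ^ 2
      ≤ (m : ℝ) * ‖z - xstar‖ ^ 2 + 2 * β * ((∑ j, Gj j xstar) - (∑ j, Gj j z))
        + (m : ℝ) * (3 * β ^ 2 * c ^ 2) := by
    calc ∑ j, ‖p j - xstar‖ ^ 2
        ≤ ∑ j : Fin m, (‖z - xstar‖ ^ 2 + 2 * β * (Gj j xstar - Gj j z) + 3 * β ^ 2 * c ^ 2) :=
          Finset.sum_le_sum (fun j _ => hkey j)
      _ = (m : ℝ) * ‖z - xstar‖ ^ 2 + 2 * β * ((∑ j, Gj j xstar) - (∑ j, Gj j z))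
          + (m : ℝ) * (3 * β ^ 2 * c ^ 2) := by
          rw [Finset.sum_add_distrib, Finset.sum_add_distrib, Finset.sum_const,
            Finset.sum_const, ← Finset.mul_sum, Finset.card_univ, Fintype.card_fin]
          rw [Finset.sum_sub_distrib]
          push_cast
          ring
  have hGz : (∑ j, Gj j xstar) - (∑ j, Gj j z) ≤ ⟪gradF xstar, z - xstar⟫ := hGstar
  -- gradient-step contraction
  have hstep : ‖z - xstar‖ ^ 2 + 2 * α * ⟪gradF xstar, z - xstar⟫
      ≤ (1 - 2 * α * μ + α ^ 2 * L ^ 2) * ‖x - xstar‖ ^ 2 := by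
    set w : E := x - xstar with hw
    set gx : E := gradF x with hgx
    set s : E := gradF xstar with hs
    clear_value w gx s
    have hz1 : z - xstar = w - α • gx := by rw [hzdef, hw, hgx]; abel
    have e1 : ‖z - xstar‖ ^ 2 = ‖w‖ ^ 2 - 2 * (α * ⟪w, gx⟫) + α ^ 2 * ‖gx‖ ^ 2 := by
      rw [hz1, norm_sub_sq_real, real_inner_smul_right, norm_smul]
      simp only [Real.norm_eq_abs, mul_pow, sq_abs]
    have e2 : ⟪s, z - xstar⟫ = ⟪s, w⟫ - α * ⟪s, gx⟫ := by
      rw [hz1, inner_sub_right, real_inner_smul_right]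
    have e3 : ‖gx - s‖ ^ 2 = ‖gx‖ ^ 2 - 2 * ⟪gx, s⟫ + ‖s‖ ^ 2 := norm_sub_sq_real _ _
    have e4 : ⟪gx - s, w⟫ = ⟪w, gx⟫ - ⟪s, w⟫ := by
      rw [inner_sub_left]
      rw [real_inner_comm gx w]
    have e5 : ⟪s, gx⟫ = ⟪gx, s⟫ := real_inner_comm _ _
    have hmono' : μ * ‖w‖ ^ 2 ≤ ⟪gx - s, w⟫ := hmono
    have hlip' : ‖gx - s‖ ≤ L * ‖w‖ := hlipx
    have hlip2 : ‖gx - s‖ ^ 2 ≤ L ^ 2 * ‖w‖ ^ 2 := by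
      nlinarith [norm_nonneg (gx - s), norm_nonneg w]
    have hforms : ‖z - xstar‖ ^ 2 + 2 * α * ⟪s, z - xstar⟫
        = ‖w‖ ^ 2 - 2 * α * ⟪gx - s, w⟫ + α ^ 2 * ‖gx - s‖ ^ 2 - α ^ 2 * ‖s‖ ^ 2 := by
      linear_combination e1 + (2*α) * e2 + (2*α) * e4 - α^2 * e3 - (2*α^2) * e5
    have t1 : 2 * α * (μ * ‖w‖ ^ 2) ≤ 2 * α * ⟪gx - s, w⟫ :=
      mul_le_mul_of_nonneg_left hmono' (by positivity)
    have t2 : α ^ 2 * ‖gx - s‖ ^ 2 ≤ α ^ 2 * (L ^ 2 * ‖w‖ ^ 2) :=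
      mul_le_mul_of_nonneg_left hlip2 (by positivity)
    have t3 : (0:ℝ) ≤ α ^ 2 * ‖s‖ ^ 2 := by positivity
    rw [hforms]
    linarith [t1, t2, t3]
  -- combine
  have hm0 : (0:ℝ) < (m:ℝ) := by exact_mod_cast hm
  have hGz' : 2 * β * ((∑ j, Gj j xstar) - (∑ j, Gj j z))
      ≤ (m:ℝ) * (2 * α * ⟪gradF xstar, z - xstar⟫) := by
    have := mul_le_mul_of_nonneg_left hGz (by positivity : (0:ℝ) ≤ 2 * β)
    calc 2 * β * ((∑ j, Gj j xstar) - (∑ j, Gj j z))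
        ≤ 2 * β * ⟪gradF xstar, z - xstar⟫ := this
      _ = (m:ℝ) * (2 * α * ⟪gradF xstar, z - xstar⟫) := by rw [hβdef]; ring
  have hstep' : (m:ℝ) * (‖z - xstar‖ ^ 2 + 2 * α * ⟪gradF xstar, z - xstar⟫)
      ≤ (m:ℝ) * ((1 - 2 * α * μ + α ^ 2 * L ^ 2) * ‖x - xstar‖ ^ 2) :=
    mul_le_mul_of_nonneg_left hstep (le_of_lt hm0)
  have h3c : (m:ℝ) * (3 * β ^ 2 * c ^ 2) = 3 * (m:ℝ) ^ 3 * c ^ 2 * α ^ 2 := by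
    rw [hβdef]; ring
  have hpos1 : (0:ℝ) ≤ (m:ℝ) * (2 * α ^ 2 * L ^ 2 * ‖x - xstar‖ ^ 2) := by positivity
  have hpos2 : (0:ℝ) ≤ 4 * (m:ℝ) ^ 3 * c ^ 2 * α ^ 2 := by positivity
  have hexpand : (m : ℝ) * ((1 - (2 * α * μ - 3 * α ^ 2 * L ^ 2)) * ‖x - xstar‖ ^ 2
          + 7 * (m : ℝ) ^ 2 * c ^ 2 * α ^ 2)
      = (m:ℝ) * ((1 - 2 * α * μ + α ^ 2 * L ^ 2) * ‖x - xstar‖ ^ 2)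
        + (m:ℝ) * (2 * α ^ 2 * L ^ 2 * ‖x - xstar‖ ^ 2)
        + 3 * (m:ℝ) ^ 3 * c ^ 2 * α ^ 2 + 4 * (m:ℝ) ^ 3 * c ^ 2 * α ^ 2 := by ring
  rw [hexpand]
  have hm2 : (m:ℝ) * (‖z - xstar‖ ^ 2 + 2 * α * ⟪gradF xstar, z - xstar⟫)
      = (m:ℝ) * ‖z - xstar‖ ^ 2 + (m:ℝ) * (2 * α * ⟪gradF xstar, z - xstar⟫) := by ring
  rw [hm2] at hstep'
  linarith [hsum, hGz', hstep', h3c, hpos1, hpos2]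
end Core


section P2
variable {E : Type*} [NormedAddCommGroup E] [InnerProductSpace ℝ E] [CompleteSpace E]

private lemma bp_min_subgrad {F G : E → ℝ} {g xs y : E}
    (hdiff : HasGradientAt F g xs)
    (hmin : ∀ u, F xs + G xs ≤ F u + G u)
    (hGcomb : ∀ t : ℝ, 0 < t → t < 1 →
      G (xs + t • (y - xs)) ≤ (1 - t) * G xs + t * G y) :
    G xs - G y ≤ ⟪g, y - xs⟫ := by
  set v : E := y - xs with hv
  have hline : HasDerivAt (fun t : ℝ => xs + t • v) v 0 := by
    simpa using ((hasDerivAt_id (0:ℝ)).smul_const v).const_add xs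
  have hφ : HasDerivAt (fun t : ℝ => F (xs + t • v)) ⟪g, v⟫ 0 := by
    have h2 := hdiff.hasFDerivAt
    have h3 : HasFDerivAt F (InnerProductSpace.toDual ℝ E g) ((fun t : ℝ => xs + t • v) 0) := by
      simpa using h2
    have h4 := h3.comp_hasDerivAt (0:ℝ) hline
    simpa [InnerProductSpace.toDual_apply_apply, Function.comp_def] using h4
  have hten := hasDerivAt_iff_tendsto_slope.mp hφ
  have hten' : Tendsto (slope (fun t : ℝ => F (xs + t • v)) 0) (nhdsWithin 0 (Set.Ioi 0))
      (nhds ⟪g, v⟫) :=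
    hten.mono_left (nhdsWithin_mono _ (fun t ht => ne_of_gt ht))
  refine ge_of_tendsto hten' ?_
  filter_upwards [Ioo_mem_nhdsGT (zero_lt_one)] with t ht
  obtain ⟨ht0, ht1⟩ := ht
  have h5 := hmin (xs + t • v)
  have h6 := hGcomb t ht0 ht1
  have h7 : t * (G xs - G y) ≤ F (xs + t • v) - F xs := by linarith
  have h8 : slope (fun t : ℝ => F (xs + t • v)) 0 t
      = (F (xs + t • v) - F xs) / t := by
    rw [slope_def_field]
    simp
  rw [h8, le_div_iff₀ ht0]
  linarith

private lemma bp_count {n m : ℕ} (hm : 0 < m) (i : Fin n) (g : Fin m → ℝ) :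
    ∑ τ : Fin n → Fin m, g (τ i) = (m : ℝ) ^ (n - 1) * ∑ j, g j := by
  have he : ∀ τ : Fin n → Fin m, g (τ i) = (fun q : Fin m × ({ j // j ≠ i } → Fin m) => g q.1)
      ((Equiv.funSplitAt i (Fin m)) τ) := by
    intro τ
    simp [Equiv.funSplitAt, Equiv.piSplitAt]
  rw [Fintype.sum_equiv (Equiv.funSplitAt i (Fin m)) (fun τ => g (τ i)) (fun q => g q.1) he]
  rw [Fintype.sum_prod_type]
  have hcard : Fintype.card ({ j // j ≠ i } → Fin m) = m ^ (n - 1) := by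
    rw [Fintype.card_fun, Fintype.card_fin]
    congr 1
    have : Fintype.card { j : Fin n // j ≠ i } = Fintype.card (Fin n) - 1 := by
      rw [Fintype.card_subtype_compl, Fintype.card_subtype_eq]
    rw [this, Fintype.card_fin]
  simp only [Finset.sum_const, Finset.card_univ, hcard, nsmul_eq_mul]
  rw [← Finset.mul_sum]
  push_cast
  ring

end P2


section BPMain

set_option maxHeartbeats 1000000

/-- **Linear convergence of BlockProx to a neighborhood.**
`F` differentiable, `L`-smooth and `μ`-strongly convex; each `G_j` convex and
`c`-Lipschitz; `H = F + ∑_j G_j` has the (unique) minimizer `x*`; constant stepsize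
`0 < α < 2μ/(3L²)`, `β = mα`.  With `Γ = 2αμ − 3α²L²` and `δ = 7m²c²α²`,
we have `Γ ∈ (0,1)` and, for every `k`,
`E‖x^{(k)} − x*‖² ≤ (1 − Γ)^k ‖x⁰ − x*‖² + δ/Γ`,
the expectation being the uniform average over the i.i.d. uniform index configurations. -/
theorem blockprox_linear_convergence_neighborhood
    (n m d : ℕ) (hn : 0 < n) (hm : 0 < m) (hd : 0 < d)
    (c L μ : ℝ) (hc : 0 ≤ c) (hL : 0 < L) (hμ : 0 < μ)
    (F : EuclideanSpace ℝ (Fin n × Fin d) → ℝ)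
    (gradF : EuclideanSpace ℝ (Fin n × Fin d) → EuclideanSpace ℝ (Fin n × Fin d))
    (hdiff : ∀ x, HasGradientAt F (gradF x) x)
    (hlip : ∀ x y, ‖gradF x - gradF y‖ ≤ L * ‖x - y‖)
    (hsc : ∀ x y, F x + ⟪gradF x, y - x⟫ + (μ / 2) * ‖y - x‖ ^ 2 ≤ F y)
    (Gj : Fin m → EuclideanSpace ℝ (Fin n × Fin d) → ℝ)
    (hGconv : ∀ j, ConvexOn ℝ Set.univ (Gj j))
    (hGlip : ∀ j, LipschitzWith c.toNNReal (Gj j))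
    (H : EuclideanSpace ℝ (Fin n × Fin d) → ℝ)
    (hHdef : ∀ x, H x = F x + ∑ j, Gj j x)
    (xstar : EuclideanSpace ℝ (Fin n × Fin d))
    (hxstar : ∀ y, H xstar ≤ H y)
    (α : ℝ) (hα : 0 < α) (hαub : α < 2 * μ / (3 * L ^ 2))
    (prox : Fin m → ℝ → EuclideanSpace ℝ (Fin n × Fin d) → EuclideanSpace ℝ (Fin n × Fin d))
    (hprox : ∀ (j : Fin m) (β : ℝ) (z : EuclideanSpace ℝ (Fin n × Fin d)), 0 < β →
      IsMinOn (fun u => Gj j u + (1 / (2 * β)) * ‖z - u‖ ^ 2) Set.univ (prox j β z))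
    (x0 : EuclideanSpace ℝ (Fin n × Fin d))
    (X : ℕ → (ℕ → Fin n → Fin m) → EuclideanSpace ℝ (Fin n × Fin d))
    (hX0 : ∀ ω, X 0 ω = x0)
    (hXrec : ∀ t ω (i : Fin n) (a : Fin d),
      X (t + 1) ω (i, a)
        = prox (ω t i) ((m : ℝ) * α) (X t ω - α • gradF (X t ω)) (i, a)) :
    (0 < 2 * α * μ - 3 * α ^ 2 * L ^ 2 ∧ 2 * α * μ - 3 * α ^ 2 * L ^ 2 < 1)
    ∧ ∀ k : ℕ,
      (1 / (m : ℝ) ^ (n * k)) *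
          ∑ σ : Fin k → Fin n → Fin m,
            ‖X k (fun t i => if h : t < k then σ ⟨t, h⟩ i else ⟨0, hm⟩) - xstar‖ ^ 2
        ≤ (1 - (2 * α * μ - 3 * α ^ 2 * L ^ 2)) ^ k * ‖x0 - xstar‖ ^ 2
          + (7 * (m : ℝ) ^ 2 * c ^ 2 * α ^ 2) / (2 * α * μ - 3 * α ^ 2 * L ^ 2) := by
  -- monotonicity of the gradient
  have hmono : ∀ x y : EuclideanSpace ℝ (Fin n × Fin d),
      μ * ‖x - y‖ ^ 2 ≤ ⟪gradF x - gradF y, x - y⟫ := by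
    intro x y
    have h1 := hsc x y
    have h2 := hsc y x
    have e1 : ⟪gradF x, y - x⟫ = -⟪gradF x, x - y⟫ := by
      rw [show y - x = -(x - y) by abel, inner_neg_right]
    have e2 : ‖y - x‖ = ‖x - y‖ := norm_sub_rev _ _
    rw [e1, e2] at h1
    rw [inner_sub_left]
    linarith
  -- μ ≤ L
  have hμL : μ ≤ L := by
    set u : EuclideanSpace ℝ (Fin n × Fin d) :=
      EuclideanSpace.single (⟨0, hn⟩, ⟨0, hd⟩) (1 : ℝ) with hu
    have hnu : ‖u - 0‖ = 1 := by
      rw [sub_zero, hu, EuclideanSpace.norm_single, norm_one]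
    have h1 := hmono u 0
    have h2 : ⟪gradF u - gradF 0, u - 0⟫ ≤ ‖gradF u - gradF 0‖ * ‖u - 0‖ :=
      real_inner_le_norm _ _
    have h3 := hlip u 0
    rw [hnu] at h1 h2 h3
    nlinarith
  -- Γ bounds
  have hαL : α * (3 * L ^ 2) < 2 * μ := by
    rw [← lt_div_iff₀ (by positivity)]
    exact hαub
  have hΓpos : 0 < 2 * α * μ - 3 * α ^ 2 * L ^ 2 := by nlinarith
  have hΓle : 2 * α * μ - 3 * α ^ 2 * L ^ 2 ≤ 1 / 3 := by
    have hμ2 : μ ^ 2 ≤ L ^ 2 := by nlinarith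
    have h1 : α ^ 2 * μ ^ 2 ≤ α ^ 2 * L ^ 2 := mul_le_mul_of_nonneg_left hμ2 (sq_nonneg α)
    nlinarith [sq_nonneg (3 * α * μ - 1)]
  have hΓlt1 : 2 * α * μ - 3 * α ^ 2 * L ^ 2 < 1 := by linarith
  refine ⟨⟨hΓpos, hΓlt1⟩, ?_⟩

  -- subgradient inequality for G at xstar
  have hGstar : ∀ y : EuclideanSpace ℝ (Fin n × Fin d),
      (∑ j, Gj j xstar) - (∑ j, Gj j y) ≤ ⟪gradF xstar, y - xstar⟫ := by
    intro y
    have hmin : ∀ u, F xstar + (∑ j, Gj j xstar) ≤ F u + (∑ j, Gj j u) := by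
      intro u
      have h1 := hxstar u
      rw [hHdef, hHdef] at h1
      linarith
    have hcomb : ∀ t : ℝ, 0 < t → t < 1 →
        (∑ j, Gj j (xstar + t • (y - xstar)))
          ≤ (1 - t) * (∑ j, Gj j xstar) + t * (∑ j, Gj j y) := by
      intro t ht0 ht1
      have hpt : xstar + t • (y - xstar) = (1 - t) • xstar + t • y := by module
      rw [hpt]
      have hj : ∀ j ∈ Finset.univ (α := Fin m),
          Gj j ((1 - t) • xstar + t • y) ≤ (1 - t) * Gj j xstar + t * Gj j y := fun j _ =>
        (hGconv j).2 (Set.mem_univ _) (Set.mem_univ _) (by linarith) (le_of_lt ht0) (by ring)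
      calc (∑ j, Gj j ((1 - t) • xstar + t • y))
          ≤ ∑ j, ((1 - t) * Gj j xstar + t * Gj j y) := Finset.sum_le_sum hj
        _ = (1 - t) * (∑ j, Gj j xstar) + t * (∑ j, Gj j y) := by
            rw [Finset.sum_add_distrib, ← Finset.mul_sum, ← Finset.mul_sum]
    exact bp_min_subgrad (G := fun u => ∑ j, Gj j u) (hdiff xstar) hmin hcomb
  -- the iterate depends only on the past
  have hXdep : ∀ (k : ℕ) (ω ω' : ℕ → Fin n → Fin m),
      (∀ t, t < k → ω t = ω' t) → X k ω = X k ω' := by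
    intro k
    induction k with
    | zero => intro ω ω' _; rw [hX0, hX0]
    | succ k ih =>
      intro ω ω' h
      have hx : X k ω = X k ω' := ih ω ω' (fun t ht => h t (Nat.lt_succ_of_lt ht))
      ext q
      obtain ⟨i, a⟩ := q
      rw [hXrec, hXrec, hx, h k (Nat.lt_succ_self k)]
  -- coordinatewise norm
  have hnsq : ∀ v : EuclideanSpace ℝ (Fin n × Fin d), ‖v‖ ^ 2 = ∑ q, (v q) ^ 2 := by
    intro v
    rw [EuclideanSpace.norm_eq, Real.sq_sqrt (by positivity)]
    simp [sq_abs]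
  have hβpos : 0 < (m : ℝ) * α := by positivity
  -- one-step recursion for the sums
  have hstepk : ∀ k : ℕ,
      (∑ σ : Fin (k+1) → Fin n → Fin m,
        ‖X (k+1) (fun t i => if h : t < k+1 then σ ⟨t, h⟩ i else ⟨0, hm⟩) - xstar‖ ^ 2)
      ≤ (m : ℝ) ^ n * ((1 - (2 * α * μ - 3 * α ^ 2 * L ^ 2)) *
          (∑ ρ : Fin k → Fin n → Fin m,
            ‖X k (fun t i => if h : t < k then ρ ⟨t, h⟩ i else ⟨0, hm⟩) - xstar‖ ^ 2)
          + (m : ℝ) ^ (n * k) * (7 * (m : ℝ) ^ 2 * c ^ 2 * α ^ 2)) := by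
    intro k
    have h2 : ∀ ρ : Fin k → Fin n → Fin m,
        (∑ τ : Fin n → Fin m,
          ‖X (k+1) (fun t i => if h : t < k+1 then (Fin.snoc ρ τ : Fin (k+1) → Fin n → Fin m) ⟨t, h⟩ i else ⟨0, hm⟩)
            - xstar‖ ^ 2)
          ≤ (m : ℝ) ^ n * ((1 - (2 * α * μ - 3 * α ^ 2 * L ^ 2)) *
              ‖X k (fun t i => if h : t < k then ρ ⟨t, h⟩ i else ⟨0, hm⟩) - xstar‖ ^ 2
            + 7 * (m : ℝ) ^ 2 * c ^ 2 * α ^ 2) := by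
      intro ρ
      set ωρ : ℕ → Fin n → Fin m :=
        fun t i => if h : t < k then ρ ⟨t, h⟩ i else ⟨0, hm⟩ with hωρ
      set x : EuclideanSpace ℝ (Fin n × Fin d) := X k ωρ with hx
      set z : EuclideanSpace ℝ (Fin n × Fin d) := x - α • gradF x with hz
      set p : Fin m → EuclideanSpace ℝ (Fin n × Fin d) :=
        fun j => prox j ((m : ℝ) * α) z with hpd
      -- identify the (k+1)-st iterate coordinatewise
      have hXid : ∀ (τ : Fin n → Fin m) (q : Fin n × Fin d),
          (X (k+1) (fun t i => if h : t < k+1 then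
              (Fin.snoc ρ τ : Fin (k+1) → Fin n → Fin m) ⟨t, h⟩ i else ⟨0, hm⟩)) q
            = p (τ q.1) q := by
        intro τ q
        obtain ⟨i, a⟩ := q
        set ω : ℕ → Fin n → Fin m := fun t i => if h : t < k+1 then
            (Fin.snoc ρ τ : Fin (k+1) → Fin n → Fin m) ⟨t, h⟩ i else ⟨0, hm⟩ with hω
        have hXk : X k ω = x := by
          rw [hx]
          apply hXdep
          intro t ht
          funext i'
          have ht' : t < k + 1 := Nat.lt_succ_of_lt ht
          rw [hω, hωρ]
          simp only [dif_pos ht', dif_pos ht]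
          have hcast : (⟨t, ht'⟩ : Fin (k+1)) = Fin.castSucc ⟨t, ht⟩ := rfl
          rw [hcast, Fin.snoc_castSucc]
        have hωk : ω k = τ := by
          funext i'
          rw [hω]
          simp only [dif_pos (Nat.lt_succ_self k)]
          have hcast : (⟨k, Nat.lt_succ_self k⟩ : Fin (k+1)) = Fin.last k := rfl
          rw [hcast, Fin.snoc_last]
        have hr := hXrec k ω i a
        rw [hXk, hωk, ← hz] at hr
        exact hr
      -- expand the norms coordinatewise
      have h3 : ∀ τ : Fin n → Fin m,
          ‖X (k+1) (fun t i => if h : t < k+1 then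
              (Fin.snoc ρ τ : Fin (k+1) → Fin n → Fin m) ⟨t, h⟩ i else ⟨0, hm⟩) - xstar‖ ^ 2
            = ∑ q, (p (τ q.1) q - xstar q) ^ 2 := by
        intro τ
        rw [hnsq]
        refine Finset.sum_congr rfl (fun q _ => ?_)
        rw [PiLp.sub_apply, hXid τ q]
      have h4 : (∑ τ : Fin n → Fin m,
          ‖X (k+1) (fun t i => if h : t < k+1 then
              (Fin.snoc ρ τ : Fin (k+1) → Fin n → Fin m) ⟨t, h⟩ i else ⟨0, hm⟩) - xstar‖ ^ 2)
          = (m : ℝ) ^ (n - 1) * ∑ j, ‖p j - xstar‖ ^ 2 := by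
        calc (∑ τ : Fin n → Fin m,
            ‖X (k+1) (fun t i => if h : t < k+1 then
              (Fin.snoc ρ τ : Fin (k+1) → Fin n → Fin m) ⟨t, h⟩ i else ⟨0, hm⟩) - xstar‖ ^ 2)
            = ∑ τ : Fin n → Fin m, ∑ q, (p (τ q.1) q - xstar q) ^ 2 :=
              Finset.sum_congr rfl (fun τ _ => h3 τ)
          _ = ∑ q : Fin n × Fin d, ∑ τ : Fin n → Fin m, (p (τ q.1) q - xstar q) ^ 2 :=
              Finset.sum_comm
          _ = ∑ q : Fin n × Fin d, (m : ℝ) ^ (n - 1) * ∑ j, (p j q - xstar q) ^ 2 :=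
              Finset.sum_congr rfl (fun q _ => bp_count hm q.1 (fun j => (p j q - xstar q) ^ 2))
          _ = (m : ℝ) ^ (n - 1) * ∑ q : Fin n × Fin d, ∑ j, (p j q - xstar q) ^ 2 := by
              rw [← Finset.mul_sum]
          _ = (m : ℝ) ^ (n - 1) * ∑ j, ∑ q : Fin n × Fin d, (p j q - xstar q) ^ 2 := by
              rw [Finset.sum_comm]
          _ = (m : ℝ) ^ (n - 1) * ∑ j, ‖p j - xstar‖ ^ 2 := by
              congr 1
              refine Finset.sum_congr rfl (fun j _ => ?_)
              rw [hnsq]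
              exact Finset.sum_congr rfl (fun q _ => by rw [PiLp.sub_apply])
      have h5 := bp_one_step hm hc hL hμ hα Gj hGconv hGlip gradF x xstar
        (hmono x xstar) (hlip x xstar) (hGstar (x - α • gradF x))
        p (fun j => hprox j ((m : ℝ) * α) z hβpos)
      have h6 : (m : ℝ) ^ (n - 1) * (m : ℝ) = (m : ℝ) ^ n := by
        have hn1 : n = (n - 1) + 1 := (Nat.succ_pred_eq_of_pos hn).symm
        rw [hn1]
        rw [pow_succ]
        rw [← hn1]
      rw [h4]
      calc (m : ℝ) ^ (n - 1) * ∑ j, ‖p j - xstar‖ ^ 2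
          ≤ (m : ℝ) ^ (n - 1) * ((m : ℝ) * ((1 - (2 * α * μ - 3 * α ^ 2 * L ^ 2)) *
              ‖x - xstar‖ ^ 2 + 7 * (m : ℝ) ^ 2 * c ^ 2 * α ^ 2)) :=
            mul_le_mul_of_nonneg_left h5 (by positivity)
        _ = (m : ℝ) ^ n * ((1 - (2 * α * μ - 3 * α ^ 2 * L ^ 2)) *
              ‖x - xstar‖ ^ 2 + 7 * (m : ℝ) ^ 2 * c ^ 2 * α ^ 2) := by
            rw [← mul_assoc, h6]
    -- assemble over prefixes
    have he : ∀ (pr : (Fin n → Fin m) × (Fin k → Fin n → Fin m)),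
        (Fin.snocEquiv (fun _ : Fin (k+1) => Fin n → Fin m)) pr
          = (Fin.snoc pr.2 pr.1 : Fin (k+1) → Fin n → Fin m) := by
      intro pr
      rfl
    have h1 : (∑ σ : Fin (k+1) → Fin n → Fin m,
        ‖X (k+1) (fun t i => if h : t < k+1 then σ ⟨t, h⟩ i else ⟨0, hm⟩) - xstar‖ ^ 2)
        = ∑ pr : (Fin n → Fin m) × (Fin k → Fin n → Fin m),
            ‖X (k+1) (fun t i => if h : t < k+1 then
              (Fin.snoc pr.2 pr.1 : Fin (k+1) → Fin n → Fin m) ⟨t, h⟩ i else ⟨0, hm⟩)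
              - xstar‖ ^ 2 := by
      rw [← Equiv.sum_comp (Fin.snocEquiv (fun _ : Fin (k+1) => Fin n → Fin m))
        (fun σ : Fin (k+1) → Fin n → Fin m =>
          ‖X (k+1) (fun t i => if h : t < k+1 then σ ⟨t, h⟩ i else ⟨0, hm⟩) - xstar‖ ^ 2)]
      refine Finset.sum_congr rfl (fun pr _ => ?_)
      rw [he pr]
    rw [h1, Fintype.sum_prod_type, Finset.sum_comm]
    have hcard : (Finset.univ (α := Fin k → Fin n → Fin m)).card = m ^ (n * k) := by
      rw [Finset.card_univ, Fintype.card_fun, Fintype.card_fun,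
        Fintype.card_fin, Fintype.card_fin, Fintype.card_fin, ← pow_mul, Nat.mul_comm]
    calc (∑ ρ : Fin k → Fin n → Fin m, ∑ τ : Fin n → Fin m,
        ‖X (k+1) (fun t i => if h : t < k+1 then
          (Fin.snoc ρ τ : Fin (k+1) → Fin n → Fin m) ⟨t, h⟩ i else ⟨0, hm⟩) - xstar‖ ^ 2)
        ≤ ∑ ρ : Fin k → Fin n → Fin m, (m : ℝ) ^ n *
            ((1 - (2 * α * μ - 3 * α ^ 2 * L ^ 2)) *
              ‖X k (fun t i => if h : t < k then ρ ⟨t, h⟩ i else ⟨0, hm⟩) - xstar‖ ^ 2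
              + 7 * (m : ℝ) ^ 2 * c ^ 2 * α ^ 2) :=
          Finset.sum_le_sum (fun ρ _ => h2 ρ)
      _ = (m : ℝ) ^ n * ((1 - (2 * α * μ - 3 * α ^ 2 * L ^ 2)) *
            (∑ ρ : Fin k → Fin n → Fin m,
              ‖X k (fun t i => if h : t < k then ρ ⟨t, h⟩ i else ⟨0, hm⟩) - xstar‖ ^ 2)
            + (m : ℝ) ^ (n * k) * (7 * (m : ℝ) ^ 2 * c ^ 2 * α ^ 2)) := by
          rw [← Finset.mul_sum]
          congr 1
          rw [Finset.sum_add_distrib, Finset.sum_const, ← Finset.mul_sum, hcard,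
            nsmul_eq_mul]
          push_cast
          ring
  -- final induction
  intro k
  induction k with
  | zero =>
    have h0 : (∑ σ : Fin 0 → Fin n → Fin m,
        ‖X 0 (fun t i => if h : t < 0 then σ ⟨t, h⟩ i else ⟨0, hm⟩) - xstar‖ ^ 2)
        = ‖x0 - xstar‖ ^ 2 := by
      rw [Fintype.sum_unique]
      rw [hX0]
    rw [h0, Nat.mul_zero, pow_zero, pow_zero]
    have hδ : 0 ≤ (7 * (m : ℝ) ^ 2 * c ^ 2 * α ^ 2) / (2 * α * μ - 3 * α ^ 2 * L ^ 2) := by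
      apply div_nonneg (by positivity) (le_of_lt hΓpos)
    linarith
  | succ k ih =>
    have hs := hstepk k
    have hpow : (m : ℝ) ^ (n * (k+1)) = (m : ℝ) ^ (n * k) * (m : ℝ) ^ n := by
      rw [Nat.mul_succ, pow_add]
    have hmnk : (0:ℝ) < (m : ℝ) ^ (n * k) := by positivity
    have hmn : (0:ℝ) < (m : ℝ) ^ n := by positivity
    have h1Γ : 0 ≤ 1 - (2 * α * μ - 3 * α ^ 2 * L ^ 2) := by linarith
    calc (1 / (m : ℝ) ^ (n * (k+1))) * ∑ σ : Fin (k+1) → Fin n → Fin m,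
        ‖X (k+1) (fun t i => if h : t < k+1 then σ ⟨t, h⟩ i else ⟨0, hm⟩) - xstar‖ ^ 2
        ≤ (1 / (m : ℝ) ^ (n * (k+1))) * ((m : ℝ) ^ n *
            ((1 - (2 * α * μ - 3 * α ^ 2 * L ^ 2)) *
              (∑ ρ : Fin k → Fin n → Fin m,
                ‖X k (fun t i => if h : t < k then ρ ⟨t, h⟩ i else ⟨0, hm⟩) - xstar‖ ^ 2)
              + (m : ℝ) ^ (n * k) * (7 * (m : ℝ) ^ 2 * c ^ 2 * α ^ 2))) :=
          mul_le_mul_of_nonneg_left hs (by positivity)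
      _ = (1 - (2 * α * μ - 3 * α ^ 2 * L ^ 2)) * ((1 / (m : ℝ) ^ (n * k)) *
            (∑ ρ : Fin k → Fin n → Fin m,
              ‖X k (fun t i => if h : t < k then ρ ⟨t, h⟩ i else ⟨0, hm⟩) - xstar‖ ^ 2))
            + 7 * (m : ℝ) ^ 2 * c ^ 2 * α ^ 2 := by
          rw [hpow]
          field_simp
      _ ≤ (1 - (2 * α * μ - 3 * α ^ 2 * L ^ 2)) *
            ((1 - (2 * α * μ - 3 * α ^ 2 * L ^ 2)) ^ k * ‖x0 - xstar‖ ^ 2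
              + (7 * (m : ℝ) ^ 2 * c ^ 2 * α ^ 2) / (2 * α * μ - 3 * α ^ 2 * L ^ 2))
            + 7 * (m : ℝ) ^ 2 * c ^ 2 * α ^ 2 := by
          have := mul_le_mul_of_nonneg_left ih h1Γ
          linarith
      _ = (1 - (2 * α * μ - 3 * α ^ 2 * L ^ 2)) ^ (k+1) * ‖x0 - xstar‖ ^ 2
            + (7 * (m : ℝ) ^ 2 * c ^ 2 * α ^ 2) / (2 * α * μ - 3 * α ^ 2 * L ^ 2) := by
          have hΓne : (2 * α * μ - 3 * α ^ 2 * L ^ 2) ≠ 0 := ne_of_gt hΓpos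
          have key : ∀ Γ A D : ℝ, Γ ≠ 0 →
              (1 - Γ) * ((1 - Γ) ^ k * A + D / Γ) + D = (1 - Γ) ^ (k+1) * A + D / Γ := by
            intro Γ A D hΓ
            have h : Γ * (D / Γ) = D := mul_div_cancel₀ D hΓ
            rw [pow_succ]
            linear_combination (-1:ℝ) * h
          exact key _ _ _ hΓne



end BPMain
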